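/- Let ℳ be a finite set of size ⌊log|𝒳|⌋ + 1. Then every guessing function G for X given Y induces a deterministic task-encoder f : 𝒳×𝒴 → ℳ whose lists satisfy E[|L^Y_M|^ρ] ≤ E[G(X|Y)^ρ]. -/

import Mathlib

open Real Finset Filter
open scoped Classical

noncomputable section

/-- `G` is a guessing function for `𝒳` given side-information in `W`: for each
side-information value `w`, `x ↦ G x w` is a bijection from `𝒳` onto `{1, …, |𝒳|}`. -/
def IsGuessing {𝒳 W : Type*} [Fintype 𝒳] (G : 𝒳 → W → ℕ) : Prop :=
  ∀ w : W, (Function.Injective fun x => G x w) ∧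
    ∀ x, G x w ∈ Finset.Icc 1 (Fintype.card 𝒳)

/-- `P` is a probability mass function on `𝒳 × 𝒴` (written in curried form). -/
def IsPMF {𝒳 𝒴 : Type*} [Fintype 𝒳] [Fintype 𝒴] (P : 𝒳 → 𝒴 → ℝ) : Prop :=
  (∀ x y, 0 ≤ P x y) ∧ ∑ x, ∑ y, P x y = 1

/-- `Q` is a conditional PMF on `M` given `(x, y)`. -/
def IsCondPMF {𝒳 𝒴 M : Type*} [Fintype M] (Q : 𝒳 → 𝒴 → M → ℝ) : Prop :=
  ∀ x y, (∀ m, 0 ≤ Q x y m) ∧ ∑ m, Q x y m = 1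

/-- Conditional Rényi entropy of order `α` (base-2 logarithms). -/
def condRenyi {𝒳 𝒴 : Type*} [Fintype 𝒳] [Fintype 𝒴] (α : ℝ) (P : 𝒳 → 𝒴 → ℝ) : ℝ :=
  (α / (1 - α)) * Real.logb 2 (∑ y, (∑ x, P x y ^ α) ^ (1 / α))

/-- Bob's guessing ambiguity: the least `ρ`-th guessing moment over guessing
functions for `X` given `(Y, M₁, M₂)`. -/
def bobGuessAmb {𝒳 𝒴 M₁ M₂ : Type*} [Fintype 𝒳] [Fintype 𝒴] [Fintype M₁] [Fintype M₂]
    (ρ : ℝ) (P : 𝒳 → 𝒴 → ℝ) (Q : 𝒳 → 𝒴 → M₁ × M₂ → ℝ) : ℝ :=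
  sInf { e | ∃ G : 𝒳 → 𝒴 × M₁ × M₂ → ℕ, IsGuessing G ∧
    e = ∑ x, ∑ y, ∑ m : M₁ × M₂, P x y * Q x y m * (G x (y, m) : ℝ) ^ ρ }

/-- Eve's ambiguity: the least `ρ`-th moment of the minimum of two guessing
functions, one for `X` given `(Y, M₁)` and one for `X` given `(Y, M₂)`. -/
def eveAmb {𝒳 𝒴 M₁ M₂ : Type*} [Fintype 𝒳] [Fintype 𝒴] [Fintype M₁] [Fintype M₂]
    (ρ : ℝ) (P : 𝒳 → 𝒴 → ℝ) (Q : 𝒳 → 𝒴 → M₁ × M₂ → ℝ) : ℝ :=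
  sInf { e | ∃ G₁ : 𝒳 → 𝒴 × M₁ → ℕ, ∃ G₂ : 𝒳 → 𝒴 × M₂ → ℕ,
    IsGuessing G₁ ∧ IsGuessing G₂ ∧
    e = ∑ x, ∑ y, ∑ m : M₁ × M₂, P x y * Q x y m *
      ((min (G₁ x (y, m.1)) (G₂ x (y, m.2)) : ℕ) : ℝ) ^ ρ }

/-- Bob's list ambiguity: the `ρ`-th moment of the size of the list of all `x`
with positive posterior probability given `(Y, M₁, M₂)`. -/
def bobListAmb {𝒳 𝒴 M₁ M₂ : Type*} [Fintype 𝒳] [Fintype 𝒴] [Fintype M₁] [Fintype M₂]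
    (ρ : ℝ) (P : 𝒳 → 𝒴 → ℝ) (Q : 𝒳 → 𝒴 → M₁ × M₂ → ℝ) : ℝ :=
  ∑ x, ∑ y, ∑ m : M₁ × M₂, P x y * Q x y m *
    ((Finset.univ.filter fun x' => 0 < P x' y * Q x' y m).card : ℝ) ^ ρ
theorem guessing_induces_taskEncoder_logCard
    {𝒳 𝒴 M : Type*} [Fintype 𝒳] [Fintype 𝒴] [Fintype M]
    [Nonempty 𝒳] [Nonempty 𝒴]
    (ρ : ℝ) (hρ : 0 < ρ) (P : 𝒳 → 𝒴 → ℝ) (hP : IsPMF P)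
    (hM : Fintype.card M = Nat.log 2 (Fintype.card 𝒳) + 1)
    (G : 𝒳 → 𝒴 → ℕ) (hG : IsGuessing G) :
    ∃ f : 𝒳 × 𝒴 → M,
      ∑ x, ∑ y, P x y *
          ((Finset.univ.filter fun x' => 0 < P x' y ∧ f (x', y) = f (x, y)).card : ℝ) ^ ρ ≤
        ∑ x, ∑ y, P x y * (G x y : ℝ) ^ ρ := by
  -- f(x,y) = ⌊log₂ G x y⌋, embedded into M
  have e : M ≃ Fin (Nat.log 2 (Fintype.card 𝒳) + 1) :=
    Fintype.equivFinOfCardEq hM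
  have hGmem : ∀ x y, G x y ∈ Finset.Icc 1 (Fintype.card 𝒳) := fun x y => (hG y).2 x
  have hlog : ∀ x y, Nat.log 2 (G x y) < Nat.log 2 (Fintype.card 𝒳) + 1 := by
    intro x y
    have h := Finset.mem_Icc.1 (hGmem x y)
    exact Nat.lt_succ_of_le (Nat.log_mono_right h.2)
  refine ⟨fun p => e.symm ⟨Nat.log 2 (G p.1 p.2), hlog p.1 p.2⟩, ?_⟩
  apply Finset.sum_le_sum
  intro x _
  apply Finset.sum_le_sum
  intro y _
  have hP0 : 0 ≤ P x y := hP.1 x y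
  have hG1 : 1 ≤ G x y := (Finset.mem_Icc.1 (hGmem x y)).1
  -- card bound
  set k := Nat.log 2 (G x y) with hk
  have hcard : (Finset.univ.filter fun x' => 0 < P x' y ∧
      (e.symm ⟨Nat.log 2 (G x' y), hlog x' y⟩ : M) =
        e.symm ⟨Nat.log 2 (G x y), hlog x y⟩).card ≤ G x y := by
    have hsub : (Finset.univ.filter fun x' => 0 < P x' y ∧
        (e.symm ⟨Nat.log 2 (G x' y), hlog x' y⟩ : M) =
          e.symm ⟨Nat.log 2 (G x y), hlog x y⟩).card ≤ (Finset.Ico (2 ^ k) (2 ^ (k + 1))).card := by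
      apply Finset.card_le_card_of_injOn (fun x' => G x' y)
      · intro x' hx'
        simp only [Finset.mem_coe, Finset.mem_filter] at hx' ⊢
        have hlogeq : Nat.log 2 (G x' y) = k := by
          have := hx'.2.2
          have h2 := e.symm.injective this
          exact congrArg Fin.val h2
        have hG1' : 1 ≤ G x' y := (Finset.mem_Icc.1 (hGmem x' y)).1
        rw [Finset.mem_Ico, ← hlogeq]
        exact ⟨Nat.pow_log_le_self 2 (by omega), Nat.lt_pow_succ_log_self (by norm_num) _⟩
      · intro a _ b _ hab
        exact (hG y).1 hab
    have hico : (Finset.Ico (2 ^ k) (2 ^ (k + 1))).card = 2 ^ k := by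
      rw [Nat.card_Ico]
      rw [pow_succ]
      omega
    calc _ ≤ 2 ^ k := by rw [← hico]; exact hsub
      _ ≤ G x y := Nat.pow_log_le_self 2 (by omega)
  have hcardR : ((Finset.univ.filter fun x' => 0 < P x' y ∧
      (e.symm ⟨Nat.log 2 (G x' y), hlog x' y⟩ : M) =
        e.symm ⟨Nat.log 2 (G x y), hlog x y⟩).card : ℝ) ≤ (G x y : ℝ) := by
    exact_mod_cast hcard
  exact mul_le_mul_of_nonneg_left (Real.rpow_le_rpow (by positivity) hcardR hρ.le) hP0
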